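/- If a 0-1 matrix A is linearly consistent, then A admits a voter-contains-candidate-interval explanation: there exist closed real intervals I_i for each row i and J_c for each column c such that A[i][c] = 1 if and only if J_c ⊆ I_i. -/

import Mathlib

/-- `A` is linearly consistent: there is a strict linear order `r` (where `r x y` means
`x ≻ y`) on the disjoint union of rows and columns such that for rows `i ≻ j` and columns
`a ≻ b`, `A[i][b] = 1` and `A[j][a] = 1` imply `A[i][a] = 1`. -/
def IsLC {n m : ℕ} (A : Fin n → Fin m → Bool) : Prop :=
  ∃ r : (Fin n ⊕ Fin m) → (Fin n ⊕ Fin m) → Prop,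
    IsStrictTotalOrder _ r ∧
    ∀ (i j : Fin n) (a b : Fin m), r (Sum.inl i) (Sum.inl j) → r (Sum.inr a) (Sum.inr b) →
      A i b = true → A j a = true → A i a = true

/-- If `A` is linearly consistent, then it admits a voter-contains-candidate-interval
explanation: closed intervals `[L i, R i]` for rows and `[l c, r c]` for columns with
`A[i][c] = 1` iff `[l c, r c] ⊆ [L i, R i]` (via endpoints). -/
theorem lc_implies_vcci {n m : ℕ} (A : Fin n → Fin m → Bool) (hLC : IsLC A) :
    ∃ (L R : Fin n → ℝ) (l r : Fin m → ℝ),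
      (∀ i, L i ≤ R i) ∧ (∀ c, l c ≤ r c) ∧
      ∀ i c, A i c = true ↔ (L i ≤ l c ∧ r c ≤ R i) := by
  classical
  obtain ⟨rel, hSTO, hcond⟩ := hLC
  have htri : ∀ x y, rel x y ∨ x = y ∨ rel y x := fun x y => by
    by_contra h
    simp only [not_or] at h
    exact h.2.1 (hSTO.trichotomous x y h.1 h.2.2)
  have htrans : ∀ x y z, rel x y → rel y z → rel x z := fun x y z => hSTO.trans x y z
  have hirr : ∀ x, ¬ rel x x := hSTO.irrefl
  set crank : Fin m → ℕ :=
    fun a => (Finset.univ.filter fun b => rel (Sum.inr a) (Sum.inr b)).card with hcrankdef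
  set rrank : Fin n → ℕ :=
    fun i => (Finset.univ.filter fun j => rel (Sum.inl i) (Sum.inl j)).card with hrrankdef
  have crank_lt : ∀ a b : Fin m, rel (Sum.inr a) (Sum.inr b) → crank b < crank a := by
    intro a b hab
    refine Finset.card_lt_card ⟨fun x hx => ?_, fun hsub => ?_⟩
    · simp only [Finset.mem_filter, Finset.mem_univ, true_and] at hx ⊢
      exact htrans _ _ _ hab hx
    · have hb : b ∈ Finset.univ.filter fun x => rel (Sum.inr a) (Sum.inr x) := by
        simp only [Finset.mem_filter, Finset.mem_univ, true_and]; exact hab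
      have := hsub hb
      simp only [Finset.mem_filter, Finset.mem_univ, true_and] at this
      exact hirr _ this
  have rrank_lt : ∀ i j : Fin n, rel (Sum.inl i) (Sum.inl j) → rrank j < rrank i := by
    intro i j hij
    refine Finset.card_lt_card ⟨fun x hx => ?_, fun hsub => ?_⟩
    · simp only [Finset.mem_filter, Finset.mem_univ, true_and] at hx ⊢
      exact htrans _ _ _ hij hx
    · have hb : j ∈ Finset.univ.filter fun x => rel (Sum.inl i) (Sum.inl x) := by
        simp only [Finset.mem_filter, Finset.mem_univ, true_and]; exact hij
      have := hsub hb
      simp only [Finset.mem_filter, Finset.mem_univ, true_and] at this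
      exact hirr _ this
  have crank_cases : ∀ b c : Fin m, crank b ≤ crank c → b = c ∨ rel (Sum.inr c) (Sum.inr b) := by
    intro b c h
    rcases htri (Sum.inr b) (Sum.inr c) with h1 | h1 | h1
    · exact absurd h (not_le.mpr (crank_lt _ _ h1))
    · exact Or.inl (Sum.inr.inj h1)
    · exact Or.inr h1
  have rrank_cases : ∀ j i : Fin n, rrank j ≤ rrank i → j = i ∨ rel (Sum.inl i) (Sum.inl j) := by
    intro j i h
    rcases htri (Sum.inl j) (Sum.inl i) with h1 | h1 | h1
    · exact absurd h (not_le.mpr (rrank_lt _ _ h1))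
    · exact Or.inl (Sum.inl.inj h1)
    · exact Or.inr h1
  have crank_le : ∀ a : Fin m, (crank a : ℝ) ≤ m := by
    intro a
    have : crank a ≤ m := by
      simpa using Finset.card_le_card
        (Finset.filter_subset (fun b => rel (Sum.inr a) (Sum.inr b)) Finset.univ)
    exact_mod_cast this
  set Sc : Fin n → Finset (Fin m) := fun i => Finset.univ.filter fun c => A i c = true with hScdef
  set Tc : Fin m → Finset (Fin n) := fun c => Finset.univ.filter fun i => A i c = true with hTcdef
  refine ⟨fun i => if h : (Sc i).Nonempty then (((Sc i).inf' h crank : ℕ) : ℝ) - (m + 1) else 0,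
          fun i => (rrank i : ℝ),
          fun c => (crank c : ℝ) - (m + 1),
          fun c => if h : (Tc c).Nonempty then (((Tc c).inf' h rrank : ℕ) : ℝ) else (n : ℝ),
          ?_, ?_, ?_⟩
  · intro i
    by_cases h : (Sc i).Nonempty
    · simp only [dif_pos h]
      obtain ⟨b, hb⟩ := h
      have h1 : (Sc i).inf' ⟨b, hb⟩ crank ≤ crank b := Finset.inf'_le _ hb
      have h2 : (crank b : ℝ) ≤ m := crank_le b
      have h3 : (((Sc i).inf' ⟨b, hb⟩ crank : ℕ) : ℝ) ≤ ((crank b : ℕ) : ℝ) :=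
        Nat.cast_le.mpr h1
      have h4 : (0 : ℝ) ≤ rrank i := by positivity
      linarith
    · simp only [dif_neg h]
      positivity
  · intro c
    have h2 : (crank c : ℝ) ≤ m := crank_le c
    by_cases h : (Tc c).Nonempty
    · simp only [dif_pos h]
      have : (0 : ℝ) ≤ (((Tc c).inf' h rrank : ℕ) : ℝ) := by positivity
      linarith
    · simp only [dif_neg h]
      have : (0 : ℝ) ≤ (n : ℝ) := by positivity
      linarith
  · intro i c
    constructor
    · intro hA
      have hc : c ∈ Sc i := by simp [hScdef, hA]
      have hi : i ∈ Tc c := by simp [hTcdef, hA]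
      have hS : (Sc i).Nonempty := ⟨c, hc⟩
      have hT : (Tc c).Nonempty := ⟨i, hi⟩
      constructor
      · simp only [dif_pos hS]
        have h1 : (Sc i).inf' hS crank ≤ crank c := Finset.inf'_le _ hc
        have h1' : (((Sc i).inf' hS crank : ℕ) : ℝ) ≤ (crank c : ℝ) := by exact_mod_cast h1
        linarith
      · simp only [dif_pos hT]
        have h1 : (Tc c).inf' hT rrank ≤ rrank i := Finset.inf'_le _ hi
        exact_mod_cast h1
    · rintro ⟨h1, h2⟩
      have hS : (Sc i).Nonempty := by
        by_contra hS
        simp only [dif_neg hS] at h1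
        have := crank_le c
        linarith
      have hT : (Tc c).Nonempty := by
        by_contra hT
        simp only [dif_neg hT] at h2
        have h3 : rrank i < n := by
          have : Sum.inl i ∉ Finset.univ.filter fun j : Fin n ⊕ Fin m =>
              rel (Sum.inl i) j := by simp [hirr]
          -- rrank i counts a subset of rows; it's at most n, in fact < n since i is excluded
          have h4 : rrank i ≤ n := by
            simpa using Finset.card_le_card
              (Finset.filter_subset (fun j => rel (Sum.inl i) (Sum.inl j)) Finset.univ)
          rcases lt_or_eq_of_le h4 with h5 | h5
          · exact h5
          · exfalso
            have h6 : (Finset.univ.filter fun j => rel (Sum.inl i) (Sum.inl j)) =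
                (Finset.univ : Finset (Fin n)) := by
              apply Finset.eq_univ_of_card
              simpa [Finset.card_univ] using h5
            have : i ∈ Finset.univ.filter fun j => rel (Sum.inl i) (Sum.inl j) := by
              rw [h6]; exact Finset.mem_univ i
            simp only [Finset.mem_filter, Finset.mem_univ, true_and] at this
            exact hirr _ this
        have : (rrank i : ℝ) < n := by exact_mod_cast h3
        linarith
      simp only [dif_pos hS] at h1
      simp only [dif_pos hT] at h2
      obtain ⟨b, hbmem, hbeq⟩ := Finset.exists_mem_eq_inf' hS crank
      obtain ⟨j, hjmem, hjeq⟩ := Finset.exists_mem_eq_inf' hT rrank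
      have hAib : A i b = true := by
        have := hbmem; simp only [hScdef, Finset.mem_filter, Finset.mem_univ, true_and] at this
        exact this
      have hAjc : A j c = true := by
        have := hjmem; simp only [hTcdef, Finset.mem_filter, Finset.mem_univ, true_and] at this
        exact this
      have hcb : crank b ≤ crank c := by
        have : (((Sc i).inf' hS crank : ℕ) : ℝ) ≤ (crank c : ℝ) := by linarith
        have h' : (Sc i).inf' hS crank ≤ crank c := by exact_mod_cast this
        rw [hbeq] at h'
        exact h'
      have hji : rrank j ≤ rrank i := by
        have h'' : (Tc c).inf' hT rrank ≤ rrank i := by exact_mod_cast h2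
        rw [hjeq] at h''
        exact h''
      rcases crank_cases b c hcb with hbc | hbc
      · rw [← hbc]; exact hAib
      rcases rrank_cases j i hji with hij | hij
      · rw [← hij]; exact hAjc
      exact hcond i j c b hij hbc hAib hAjc
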